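/- Let x₀ ∈ ℝ and let u be nine times continuously differentiable on a neighborhood of x₀. Then, as h → 0⁺, (20/(27h))·(u(x₀+h) − u(x₀−h)) + (25/(216h))·(u(x₀+2h) − u(x₀−2h)) − (4/9)·(u'(x₀−h) + u'(x₀+h)) − (1/36)·(u'(x₀−2h) + u'(x₀+2h)) − u'(x₀) = −(h⁸/22680)·u⁽⁹⁾(x₀) + o(h⁸). -/

import Mathlib

open Filter Topology Asymptotics Set
open scoped Nat

private lemma idw_icc_eq {f : ℝ → ℝ} {t : Set ℝ} (ht : IsOpen t) {n : ℕ}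
    (hf : ContDiffOn ℝ (n : ℕ) f t) {a b : ℝ} (hab : a < b) (hsub : Icc a b ⊆ t)
    {k : ℕ} (hk : k ≤ n) {x : ℝ} (hx : x ∈ Icc a b) :
    iteratedDerivWithin k f (Icc a b) x = iteratedDeriv k f x := by
  have h1 : HasFTaylorSeriesUpToOn (n : ℕ) f (ftaylorSeriesWithin ℝ f t) (Icc a b) :=
    (hf.ftaylorSeriesWithin ht.uniqueDiffOn).mono hsub
  have h2 : ftaylorSeriesWithin ℝ f t x k = iteratedFDerivWithin ℝ k f (Icc a b) x :=
    h1.eq_iteratedFDerivWithin_of_uniqueDiffOn (by exact_mod_cast hk) (uniqueDiffOn_Icc hab) hx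
  have h3 : ftaylorSeriesWithin ℝ f t x k = iteratedFDeriv ℝ k f x :=
    iteratedFDerivWithin_of_isOpen k ht (hsub hx)
  rw [iteratedDerivWithin_eq_iteratedFDerivWithin, iteratedDeriv_eq_iteratedFDeriv, ← h2, h3]

private lemma peanoPos {f : ℝ → ℝ} {x₀ ε : ℝ} (hε : 0 < ε) {n : ℕ}
    (hf : ContDiffOn ℝ (n + 1 : ℕ) f (Metric.ball x₀ ε)) :
    (fun h : ℝ => f (x₀ + h) -
        ∑ k ∈ Finset.range (n + 2), h ^ k / (k ! : ℝ) * iteratedDeriv k f x₀)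
      =o[𝓝[>] (0:ℝ)] fun h => h ^ (n + 1) := by
  set B := Metric.ball x₀ ε with hBdef
  have hBo : IsOpen B := Metric.isOpen_ball
  have hx₀B : x₀ ∈ B := Metric.mem_ball_self hε
  set g := iteratedDeriv (n + 1) f with hgdef
  have hg : ContinuousOn g B := by
    have h0 := hf.continuousOn_iteratedDerivWithin (m := n + 1) le_rfl hBo.uniqueDiffOn
    refine ContinuousOn.congr h0 fun x hx => ?_
    rw [hgdef, iteratedDeriv_eq_iteratedFDeriv, iteratedDerivWithin_eq_iteratedFDerivWithin,
      iteratedFDerivWithin_of_isOpen _ hBo hx]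
  have hgx₀ : ContinuousAt g x₀ := hg.continuousAt (hBo.mem_nhds hx₀B)
  rw [Asymptotics.isLittleO_iff]
  intro c hc
  have hfacpos : (0:ℝ) < ((n + 1)! : ℝ) := by positivity
  have hc' : 0 < c * ((n + 1)! : ℝ) := by positivity
  have hev : ∀ᶠ y in 𝓝 x₀, |g y - g x₀| < c * ((n + 1)! : ℝ) := by
    have := hgx₀.eventually (Metric.ball_mem_nhds (g x₀) hc')
    filter_upwards [this] with y hy
    simpa [Real.dist_eq] using hy
  rw [Metric.eventually_nhds_iff] at hev
  obtain ⟨δ, hδpos, hδ⟩ := hev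
  have hδ'pos : 0 < min δ ε := lt_min hδpos hε
  have hmem : Ioo (0:ℝ) (min δ ε) ∈ 𝓝[>] (0:ℝ) :=
    Ioo_mem_nhdsGT_of_mem ⟨le_rfl, hδ'pos⟩
  filter_upwards [hmem] with h hh
  obtain ⟨hh0, hhδ⟩ := hh
  have hhδ' : h < δ := lt_of_lt_of_le hhδ (min_le_left _ _)
  have hhε : h < ε := lt_of_lt_of_le hhδ (min_le_right _ _)
  have hab : x₀ < x₀ + h := by linarith
  have hsub : Icc x₀ (x₀ + h) ⊆ B := by
    intro y hy
    simp only [hBdef, Metric.mem_ball, Real.dist_eq]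
    rw [abs_of_nonneg (by linarith [hy.1])]
    linarith [hy.2]
  have hfIcc : ContDiffOn ℝ (n : ℕ) f (Icc x₀ (x₀ + h)) :=
    (hf.of_le (by exact_mod_cast Nat.le_succ n)).mono hsub
  have hdiff : DifferentiableOn ℝ (iteratedDerivWithin n f (Icc x₀ (x₀ + h)))
      (Ioo x₀ (x₀ + h)) := by
    have h1 : DifferentiableOn ℝ (iteratedDerivWithin n f B) B :=
      hf.differentiableOn_iteratedDerivWithin (by exact_mod_cast Nat.lt_succ_self n)
        hBo.uniqueDiffOn
    have h2 : DifferentiableOn ℝ (iteratedDeriv n f) B := by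
      refine h1.congr fun x hx => ?_
      rw [iteratedDeriv_eq_iteratedFDeriv, iteratedDerivWithin_eq_iteratedFDerivWithin,
        iteratedFDerivWithin_of_isOpen _ hBo hx]
    refine (h2.mono (fun y hy => hsub (Ioo_subset_Icc_self hy))).congr fun x hx => ?_
    exact idw_icc_eq hBo (hf.of_le (by exact_mod_cast Nat.le_succ n)) hab hsub
      (le_refl n) (Ioo_subset_Icc_self hx)
  obtain ⟨x', hx', hTaylor⟩ := taylor_mean_remainder_lagrange hab.ne (by rwa [uIcc_of_lt hab])
    (by rwa [uIcc_of_lt hab, uIoo_of_lt hab])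
  rw [uIoo_of_lt hab] at hx'
  rw [uIcc_of_lt hab] at hTaylor
  have hTsum : taylorWithinEval f n (Icc x₀ (x₀ + h)) x₀ (x₀ + h) =
      ∑ k ∈ Finset.range (n + 1), h ^ k / (k ! : ℝ) * iteratedDeriv k f x₀ := by
    rw [taylor_within_apply]
    refine Finset.sum_congr rfl fun k hk => ?_
    rw [idw_icc_eq hBo hf hab hsub (by have := Finset.mem_range.mp hk; omega : k ≤ n + 1) (left_mem_Icc.2 (le_of_lt hab))]
    rw [smul_eq_mul, add_sub_cancel_left]
    ring
  have hDW : iteratedDerivWithin (n + 1) f (Icc x₀ (x₀ + h)) x' = g x' :=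
    idw_icc_eq hBo hf hab hsub (le_refl (n + 1)) (Ioo_subset_Icc_self hx')
  rw [hTsum, hDW, add_sub_cancel_left] at hTaylor
  have key : f (x₀ + h) -
      ∑ k ∈ Finset.range (n + 2), h ^ k / (k ! : ℝ) * iteratedDeriv k f x₀ =
      (g x' - g x₀) * h ^ (n + 1) / ((n + 1)! : ℝ) := by
    rw [Finset.sum_range_succ]
    have : iteratedDeriv (n + 1) f x₀ = g x₀ := rfl
    rw [this]
    field_simp at hTaylor ⊢
    linarith [hTaylor]
  rw [key]
  have hx'δ : |g x' - g x₀| < c * ((n + 1)! : ℝ) := by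
    apply hδ
    rw [Real.dist_eq, abs_of_nonneg (by linarith [hx'.1])]
    linarith [hx'.2]
  have hpow : (0:ℝ) < h ^ (n + 1) := pow_pos hh0 _
  rw [Real.norm_eq_abs, Real.norm_eq_abs, abs_div, abs_mul, abs_of_pos hpow, abs_of_pos hfacpos]
  rw [div_le_iff₀ hfacpos]
  nlinarith [mul_le_mul_of_nonneg_right (le_of_lt hx'δ) (le_of_lt hpow), abs_nonneg (g x' - g x₀)]

private lemma peanoPosC {f : ℝ → ℝ} {x₀ ε : ℝ} (hε : 0 < ε) {n : ℕ}
    (hf : ContDiffOn ℝ (n + 1 : ℕ) f (Metric.ball x₀ ε)) {c : ℝ} (hc : 0 < c) :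
    (fun h : ℝ => f (x₀ + c * h) -
        ∑ k ∈ Finset.range (n + 2), (c * h) ^ k / (k ! : ℝ) * iteratedDeriv k f x₀)
      =o[𝓝[>] (0:ℝ)] fun h => h ^ (n + 1) := by
  have h1 := peanoPos hε hf
  have ht : Tendsto (fun h : ℝ => c * h) (𝓝[>] 0) (𝓝[>] (0:ℝ)) := by
    rw [tendsto_nhdsWithin_iff]
    constructor
    · have : Tendsto (fun h : ℝ => c * h) (𝓝 0) (𝓝 (c * 0)) :=
        (continuous_const.mul continuous_id).tendsto 0
      simpa using this.mono_left nhdsWithin_le_nhds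
    · filter_upwards [self_mem_nhdsWithin] with x hx
      exact mul_pos hc hx
  have h2 := h1.comp_tendsto ht
  have h3 : ((fun d : ℝ => f (x₀ + d) -
      ∑ k ∈ Finset.range (n + 2), d ^ k / (k ! : ℝ) * iteratedDeriv k f x₀) ∘
      (fun h : ℝ => c * h)) = fun h : ℝ => f (x₀ + c * h) -
      ∑ k ∈ Finset.range (n + 2), (c * h) ^ k / (k ! : ℝ) * iteratedDeriv k f x₀ := rfl
  rw [h3] at h2
  have h4 : ((fun d : ℝ => d ^ (n + 1)) ∘ (fun h : ℝ => c * h)) =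
      fun h : ℝ => c ^ (n + 1) * h ^ (n + 1) := by
    funext h; simp [Function.comp, mul_pow]
  rw [h4] at h2
  exact h2.trans_isBigO (isBigO_const_mul_self (c ^ (n + 1)) _ _)

private lemma peanoC {f : ℝ → ℝ} {x₀ ε : ℝ} (hε : 0 < ε) {n : ℕ}
    (hf : ContDiffOn ℝ (n + 1 : ℕ) f (Metric.ball x₀ ε)) (c : ℝ) :
    (fun h : ℝ => f (x₀ + c * h) -
        ∑ k ∈ Finset.range (n + 2), (c * h) ^ k / (k ! : ℝ) * iteratedDeriv k f x₀)
      =o[𝓝[>] (0:ℝ)] fun h => h ^ (n + 1) := by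
  rcases lt_trichotomy c 0 with hc | hc | hc
  · -- reflection
    set g : ℝ → ℝ := fun y => f (2 * x₀ - y) with hgdef
    have hmaps : MapsTo (fun y : ℝ => 2 * x₀ - y) (Metric.ball x₀ ε) (Metric.ball x₀ ε) := by
      intro y hy
      simp only [Metric.mem_ball, Real.dist_eq] at *
      have : 2 * x₀ - y - x₀ = -(y - x₀) := by ring
      rw [this, abs_neg]
      exact hy
    have hg : ContDiffOn ℝ (n + 1 : ℕ) g (Metric.ball x₀ ε) :=
      hf.comp ((contDiff_const.sub contDiff_id).contDiffOn) hmaps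
    have hgD : ∀ k : ℕ, iteratedDeriv k g x₀ = (-1 : ℝ) ^ k * iteratedDeriv k f x₀ := by
      intro k
      have e1 : g = fun z : ℝ => (fun x : ℝ => f (-x)) (z + (-2 * x₀)) := by
        funext z
        simp only [hgdef]
        congr 1
        ring
      rw [e1, iteratedDeriv_comp_add_const k (fun x : ℝ => f (-x)) (-2 * x₀)]
      show iteratedDeriv k (fun x : ℝ => f (-x)) (x₀ + -2 * x₀) = _
      rw [iteratedDeriv_comp_neg]
      have : -(x₀ + -2 * x₀) = x₀ := by ring
      rw [this, smul_eq_mul]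
    have hres := peanoPosC hε hg (show (0:ℝ) < -c by linarith)
    have heq : (fun h : ℝ => g (x₀ + -c * h) -
        ∑ k ∈ Finset.range (n + 2), (-c * h) ^ k / (k ! : ℝ) * iteratedDeriv k g x₀) =
        fun h : ℝ => f (x₀ + c * h) -
        ∑ k ∈ Finset.range (n + 2), (c * h) ^ k / (k ! : ℝ) * iteratedDeriv k f x₀ := by
      funext h
      have e2 : g (x₀ + -c * h) = f (x₀ + c * h) := by
        simp only [hgdef]; congr 1; ring
      rw [e2]
      congr 1
      refine Finset.sum_congr rfl fun k _ => ?_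
      rw [hgD k, show (-c * h : ℝ) = (-1) * (c * h) by ring, mul_pow]
      have h11 : ((-1:ℝ)) ^ k * (-1:ℝ) ^ k = 1 := by rw [← mul_pow]; norm_num
      linear_combination ((c * h) ^ k / (k ! : ℝ) * iteratedDeriv k f x₀) * h11
    rw [heq] at hres
    exact hres
  · subst hc
    have heq : (fun h : ℝ => f (x₀ + 0 * h) -
        ∑ k ∈ Finset.range (n + 2), (0 * h) ^ k / (k ! : ℝ) * iteratedDeriv k f x₀) =
        fun _ : ℝ => (0:ℝ) := by
      funext h
      simp [Finset.sum_range_succ', zero_pow]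
    rw [heq]
    exact isLittleO_zero _ _
  · exact peanoPosC hε hf hc

private lemma div_mul_h_littleO {f : ℝ → ℝ} {n : ℕ}
    (hf : f =o[𝓝[>] (0:ℝ)] fun h => h ^ (n + 1)) (a b : ℝ) :
    (fun h : ℝ => a / (b * h) * f h) =o[𝓝[>] (0:ℝ)] fun h => h ^ n := by
  have h1 : (fun h : ℝ => a / (b * h)) =O[𝓝[>] (0:ℝ)] fun h : ℝ => h⁻¹ := by
    rw [isBigO_iff]
    refine ⟨|a / b|, ?_⟩
    filter_upwards with x
    rw [Real.norm_eq_abs, Real.norm_eq_abs,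
      show a / (b * x) = a / b * x⁻¹ by rw [div_eq_mul_inv, div_eq_mul_inv, mul_inv, mul_assoc],
      abs_mul]
  have h2 := h1.mul_isLittleO hf
  refine h2.congr' EventuallyEq.rfl ?_
  filter_upwards [self_mem_nhdsWithin] with x (hx : (0:ℝ) < x)
  show x⁻¹ * x ^ (n + 1) = x ^ n
  field_simp
  exact pow_succ' x n

set_option maxHeartbeats 2000000 in
/-- Leading-order truncation error of the eighth-order compact FD scheme for
the first derivative. -/
theorem compact_fd8_first_deriv_lte (x₀ : ℝ) (u : ℝ → ℝ)
    (s : Set ℝ) (hs : s ∈ 𝓝 x₀) (hu : ContDiffOn ℝ 9 u s) :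
    (fun h : ℝ =>
        20 / (27 * h) * (u (x₀ + h) - u (x₀ - h)) +
        25 / (216 * h) * (u (x₀ + 2 * h) - u (x₀ - 2 * h)) -
        4 / 9 * (deriv u (x₀ - h) + deriv u (x₀ + h)) -
        1 / 36 * (deriv u (x₀ - 2 * h) + deriv u (x₀ + 2 * h)) -
        deriv u x₀ -
        (-(h ^ 8 / 22680) * iteratedDeriv 9 u x₀))
      =o[𝓝[>] 0] fun h : ℝ => h ^ 8 := by
  obtain ⟨ε, hε, hball⟩ := Metric.mem_nhds_iff.mp hs
  have hu9 : ContDiffOn ℝ ((8 : ℕ) + 1 : ℕ) u (Metric.ball x₀ ε) := by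
    show ContDiffOn ℝ ((9 : ℕ) : WithTop ℕ∞) u _
    rw [Nat.cast_ofNat]
    exact hu.mono hball
  have hv8 : ContDiffOn ℝ ((7 : ℕ) + 1 : ℕ) (deriv u) (Metric.ball x₀ ε) := by
    refine hu9.deriv_of_isOpen Metric.isOpen_ball ?_
    norm_num
  have hconv : ∀ k : ℕ, iteratedDeriv k (deriv u) x₀ = iteratedDeriv (k + 1) u x₀ :=
    fun k => by rw [iteratedDeriv_succ']
  -- the eight remainder estimates
  have E1 : (fun h : ℝ => u (x₀ + h) -
      ∑ k ∈ Finset.range (8 + 2), h ^ k / (k ! : ℝ) * iteratedDeriv k u x₀)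
      =o[𝓝[>] (0:ℝ)] fun h => h ^ (8 + 1) :=
    (peanoC hε hu9 1).congr (fun h => by norm_num) (fun _ => rfl)
  have Em1 : (fun h : ℝ => u (x₀ - h) -
      ∑ k ∈ Finset.range (8 + 2), (-h) ^ k / (k ! : ℝ) * iteratedDeriv k u x₀)
      =o[𝓝[>] (0:ℝ)] fun h => h ^ (8 + 1) := by
    refine (peanoC hε hu9 (-1)).congr (fun h => ?_) (fun _ => rfl)
    rw [show x₀ + (-1) * h = x₀ - h by ring]
    congr 1
    exact Finset.sum_congr rfl fun k _ => by rw [show (-1 : ℝ) * h = -h by ring]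
  have E2 : (fun h : ℝ => u (x₀ + 2 * h) -
      ∑ k ∈ Finset.range (8 + 2), (2 * h) ^ k / (k ! : ℝ) * iteratedDeriv k u x₀)
      =o[𝓝[>] (0:ℝ)] fun h => h ^ (8 + 1) := peanoC hε hu9 2
  have Em2 : (fun h : ℝ => u (x₀ - 2 * h) -
      ∑ k ∈ Finset.range (8 + 2), (-(2 * h)) ^ k / (k ! : ℝ) * iteratedDeriv k u x₀)
      =o[𝓝[>] (0:ℝ)] fun h => h ^ (8 + 1) := by
    refine (peanoC hε hu9 (-2)).congr (fun h => ?_) (fun _ => rfl)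
    rw [show x₀ + (-2) * h = x₀ - 2 * h by ring]
    congr 1
    exact Finset.sum_congr rfl fun k _ => by rw [show (-2 : ℝ) * h = -(2 * h) by ring]
  have F1 : (fun h : ℝ => deriv u (x₀ + h) -
      ∑ k ∈ Finset.range (7 + 2), h ^ k / (k ! : ℝ) * iteratedDeriv (k + 1) u x₀)
      =o[𝓝[>] (0:ℝ)] fun h => h ^ (7 + 1) := by
    refine (peanoC hε hv8 1).congr (fun h => ?_) (fun _ => rfl)
    rw [show x₀ + 1 * h = x₀ + h by ring]
    congr 1
    exact Finset.sum_congr rfl fun k _ => by rw [hconv k, one_mul]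
  have Fm1 : (fun h : ℝ => deriv u (x₀ - h) -
      ∑ k ∈ Finset.range (7 + 2), (-h) ^ k / (k ! : ℝ) * iteratedDeriv (k + 1) u x₀)
      =o[𝓝[>] (0:ℝ)] fun h => h ^ (7 + 1) := by
    refine (peanoC hε hv8 (-1)).congr (fun h => ?_) (fun _ => rfl)
    rw [show x₀ + (-1) * h = x₀ - h by ring]
    congr 1
    exact Finset.sum_congr rfl fun k _ => by
      rw [hconv k, show (-1 : ℝ) * h = -h by ring]
  have F2 : (fun h : ℝ => deriv u (x₀ + 2 * h) -
      ∑ k ∈ Finset.range (7 + 2), (2 * h) ^ k / (k ! : ℝ) * iteratedDeriv (k + 1) u x₀)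
      =o[𝓝[>] (0:ℝ)] fun h => h ^ (7 + 1) := by
    refine (peanoC hε hv8 2).congr (fun h => ?_) (fun _ => rfl)
    congr 1
    exact Finset.sum_congr rfl fun k _ => by rw [hconv k]
  have Fm2 : (fun h : ℝ => deriv u (x₀ - 2 * h) -
      ∑ k ∈ Finset.range (7 + 2), (-(2 * h)) ^ k / (k ! : ℝ) * iteratedDeriv (k + 1) u x₀)
      =o[𝓝[>] (0:ℝ)] fun h => h ^ (7 + 1) := by
    refine (peanoC hε hv8 (-2)).congr (fun h => ?_) (fun _ => rfl)
    rw [show x₀ + (-2) * h = x₀ - 2 * h by ring]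
    congr 1
    exact Finset.sum_congr rfl fun k _ => by
      rw [hconv k, show (-2 : ℝ) * h = -(2 * h) by ring]
  -- the combined little-o bound
  have big := (((div_mul_h_littleO (E1.sub Em1) 20 27).add
      (div_mul_h_littleO (E2.sub Em2) 25 216)).sub
      ((Fm1.add F1).const_mul_left (4 / 9))).sub
      ((Fm2.add F2).const_mul_left (1 / 36))
  refine big.congr' ?_ EventuallyEq.rfl
  filter_upwards [self_mem_nhdsWithin] with h (hh : (0:ℝ) < h)
  have hne : h ≠ 0 := ne_of_gt hh
  have hd : deriv u x₀ = iteratedDeriv 1 u x₀ := by rw [iteratedDeriv_one]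
  simp only [Finset.sum_range_succ, Finset.sum_range_zero, hd]
  norm_num [Nat.factorial]
  field_simp
  ring
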